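/- A proper, lsc, convex function g : ℝᵖ → ℝ with full domain is differentiable with L-Lipschitz gradient (L > 0) if and only if its conjugate g* is (1/L)-strongly convex. -/

import Mathlib

open scoped InnerProductSpace
noncomputable section

/-- Convexity of an extended-real-valued function, via convexity of its epigraph. -/
def ConvexFnE {V : Type*} [AddCommGroup V] [Module ℝ V] (f : V → EReal) : Prop :=
  Convex ℝ {q : V × ℝ | f q.1 ≤ (q.2 : EReal)}

/-- `m`-strong convexity of an extended-real-valued function:
`g − (m/2)‖·‖²` is convex. -/
def StrongConvexE {V : Type*} [NormedAddCommGroup V] [NormedSpace ℝ V]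
    (m : ℝ) (g : V → EReal) : Prop :=
  ConvexFnE (fun x => g x - ((m / 2 * ‖x‖ ^ 2 : ℝ) : EReal))

/-- Fenchel conjugate of an extended-real-valued function on an inner product space. -/
def econj {V : Type*} [NormedAddCommGroup V] [InnerProductSpace ℝ V]
    (f : V → EReal) (y : V) : EReal :=
  ⨆ x, ((⟪x, y⟫_ℝ : ℝ) : EReal) - f x

lemma memS_iff {V : Type*} [NormedAddCommGroup V] [InnerProductSpace ℝ V]
    (g : V → ℝ) (c r : ℝ) (y : V) :
    econj (fun x => ((g x : ℝ) : EReal)) y - ((c : ℝ) : EReal) ≤ ((r : ℝ) : EReal) ↔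
      ∀ x, ⟪x, y⟫_ℝ - g x - c ≤ r := by
  unfold econj
  have h1 : (⨆ x : V, (((⟪x, y⟫_ℝ : ℝ) : EReal) - ((g x : ℝ) : EReal)))
      = ⨆ x : V, (((⟪x, y⟫_ℝ - g x : ℝ)) : EReal) := by
    exact iSup_congr fun x => (EReal.coe_sub _ _).symm
  rw [h1, EReal.sub_le_iff_le_add (Or.inl (EReal.coe_ne_bot c)) (Or.inl (EReal.coe_ne_top c)),
    ← EReal.coe_add, iSup_le_iff]
  constructor
  · intro h x; have := h x; rw [EReal.coe_le_coe_iff] at this; linarith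
  · intro h x; rw [EReal.coe_le_coe_iff]; have := h x; linarith

lemma exists_subgradient {V : Type*} [NormedAddCommGroup V] [InnerProductSpace ℝ V]
    [FiniteDimensional ℝ V] (g : V → ℝ) (hconv : ConvexOn ℝ Set.univ g) (x₀ : V) :
    ∃ u : V, ∀ x, g x₀ + ⟪x - x₀, u⟫_ℝ ≤ g x := by
  have hg : Continuous g := by
    rw [← continuousOn_univ]; exact hconv.continuousOn isOpen_univ
  set s : Set (V × ℝ) := {q | g q.1 < q.2} with hs
  have hsconv : Convex ℝ s := by
    rintro ⟨p1, t1⟩ h1 ⟨p2, t2⟩ h2 a b ha hb hab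
    simp only [hs, Set.mem_setOf_eq] at h1 h2 ⊢
    have hcomb := hconv.2 (Set.mem_univ p1) (Set.mem_univ p2) ha hb hab
    simp only [smul_eq_mul, Prod.smul_mk, Prod.mk_add_mk] at hcomb ⊢
    rcases eq_or_lt_of_le ha with ha0 | ha'
    · have hb1 : b = 1 := by linarith
      subst hb1
      rw [← ha0]
      simpa using h2
    · have : a * g p1 + b * g p2 < a * t1 + b * t2 := by nlinarith
      exact lt_of_le_of_lt hcomb this
  have hsopen : IsOpen s := isOpen_lt (hg.comp continuous_fst) continuous_snd
  have hpt : (x₀, g x₀) ∉ s := by simp [hs]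
  obtain ⟨l, hl⟩ := geometric_hahn_banach_point_open hsconv hsopen hpt
  have hdecomp : ∀ (x : V) (t : ℝ), l (x, t) = l (x, 0) + t * l (0, 1) := by
    intro x t
    have : ((x, t) : V × ℝ) = (x, (0:ℝ)) + t • ((0:V), (1:ℝ)) := by
      simp [Prod.ext_iff]
    rw [this, map_add, map_smul]; ring_nf
  set β := l (0, 1) with hβ
  have key : ∀ x t, g x < t → l (x₀, g x₀) < l (x, 0) + t * β := by
    intro x t ht
    have := hl (x, t) ht
    rwa [hdecomp x t] at this
  have hβpos : 0 < β := by
    have := key x₀ (g x₀ + 1) (by linarith)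
    rw [hdecomp x₀ (g x₀)] at this
    linarith
  have key2 : ∀ x, l (x₀, 0) + g x₀ * β ≤ l (x, 0) + g x * β := by
    intro x
    refine le_of_forall_pos_lt_add fun ε hε => ?_
    have hd : 0 < ε / β := div_pos hε hβpos
    have := key x (g x + ε / β) (by linarith)
    rw [hdecomp x₀ (g x₀)] at this
    have h2 : (g x + ε / β) * β = g x * β + ε := by field_simp
    nlinarith
  set φ : V →L[ℝ] ℝ := l.comp (ContinuousLinearMap.inl ℝ V ℝ) with hφ
  have hφeq : ∀ x, φ x = l (x, 0) := fun x => rfl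
  set v := (InnerProductSpace.toDual ℝ V).symm φ with hv
  refine ⟨(-(1 / β)) • v, fun x => ?_⟩
  have h1 : ⟪v, x - x₀⟫_ℝ = l (x, 0) - l (x₀, 0) := by
    rw [InnerProductSpace.toDual_symm_apply, hφeq, ← map_sub]
    congr 1
    simp [Prod.ext_iff]
  have h2 := key2 x
  have h3 : ⟪x - x₀, (-(1 / β)) • v⟫_ℝ = -(1/β) * (l (x,0) - l (x₀,0)) := by
    rw [real_inner_smul_right, real_inner_comm, h1]
  rw [h3, ← sub_nonneg]
  have hβ' : β ≠ 0 := ne_of_gt hβpos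
  have h4 : (g x - (g x₀ + -(1/β) * (l (x,0) - l (x₀,0)))) * β
      = (l (x,0) + g x * β) - (l (x₀,0) + g x₀ * β) := by field_simp; ring
  nlinarith [h4, h2, hβpos]

lemma descent_lemma {V : Type*} [NormedAddCommGroup V] [InnerProductSpace ℝ V]
    [CompleteSpace V] (L : ℝ) (g : V → ℝ)
    (hdiff : Differentiable ℝ g)
    (hlip : ∀ x y, ‖gradient g x - gradient g y‖ ≤ L * ‖x - y‖) :
    ∀ x z, g z ≤ g x + ⟪z - x, gradient g x⟫_ℝ + L / 2 * ‖z - x‖ ^ 2 := by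
  intro x z
  set d := z - x with hd
  set ψ : ℝ → ℝ := fun t => g (x + t • d) - t * ⟪d, gradient g x⟫_ℝ - L * t ^ 2 / 2 * ‖d‖ ^ 2
    with hψdef
  have hψ : ∀ t : ℝ, HasDerivAt ψ
      (⟪gradient g (x + t • d), d⟫_ℝ - ⟪d, gradient g x⟫_ℝ - L * t * ‖d‖ ^ 2) t := by
    intro t
    have hc : HasDerivAt (fun t : ℝ => x + t • d) d t := by
      simpa using ((hasDerivAt_id t).smul_const d).const_add x
    have hg : HasGradientAt g (gradient g (x + t • d)) (x + t • d) :=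
      (hdiff (x + t • d)).hasGradientAt
    have hg' := hg.hasFDerivAt.comp_hasDerivAt t hc
    have h1 : HasDerivAt (fun t : ℝ => g (x + t • d)) (⟪gradient g (x + t • d), d⟫_ℝ) t := by
      simpa [InnerProductSpace.toDual_apply_apply, Function.comp_def] using hg'
    have h2 : HasDerivAt (fun t : ℝ => t * ⟪d, gradient g x⟫_ℝ) (⟪d, gradient g x⟫_ℝ) t := by
      simpa using (hasDerivAt_id t).mul_const (⟪d, gradient g x⟫_ℝ)
    have h3 : HasDerivAt (fun t : ℝ => L * t ^ 2 / 2 * ‖d‖ ^ 2) (L * t * ‖d‖ ^ 2) t := by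
      have := ((hasDerivAt_pow 2 t).const_mul L).div_const 2
      have := this.mul_const (‖d‖ ^ 2)
      exact this.congr_deriv (by ring)
    exact (h1.sub h2).sub h3
  have hmono : AntitoneOn ψ (Set.Icc 0 1) := by
    apply antitoneOn_of_deriv_nonpos (convex_Icc 0 1)
    · exact Continuous.continuousOn (by
        apply continuous_iff_continuousAt.2
        intro t; exact (hψ t).continuousAt)
    · intro t _; exact (hψ t).differentiableAt.differentiableWithinAt
    · intro t ht
      rw [interior_Icc, Set.mem_Ioo] at ht
      rw [(hψ t).deriv]
      have hinner : ⟪gradient g (x + t • d), d⟫_ℝ - ⟪d, gradient g x⟫_ℝ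
          = ⟪gradient g (x + t • d) - gradient g x, d⟫_ℝ := by
        have e1 : ⟪gradient g (x + t • d) - gradient g x, d⟫_ℝ
            = ⟪gradient g (x + t • d), d⟫_ℝ - ⟪gradient g x, d⟫_ℝ := inner_sub_left _ _ _
        have e2 : ⟪d, gradient g x⟫_ℝ = ⟪gradient g x, d⟫_ℝ := real_inner_comm _ _
        linarith
      rw [hinner]
      have h1 : ⟪gradient g (x + t • d) - gradient g x, d⟫_ℝ
          ≤ ‖gradient g (x + t • d) - gradient g x‖ * ‖d‖ := real_inner_le_norm _ _
      have h2 : ‖gradient g (x + t • d) - gradient g x‖ ≤ L * (t * ‖d‖) := by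
        have := hlip (x + t • d) x
        simpa [norm_smul, abs_of_pos ht.1] using this
      nlinarith [norm_nonneg d, norm_nonneg (gradient g (x + t • d) - gradient g x)]
  have := hmono (Set.mem_Icc.2 ⟨le_refl 0, zero_le_one⟩) (Set.mem_Icc.2 ⟨zero_le_one, le_refl 1⟩)
    zero_le_one
  simp only [hψdef, zero_smul, one_smul, add_zero, zero_mul, zero_pow, mul_zero, sub_zero,
    one_pow, mul_one, zero_div] at this
  have hxd : x + d = z := by rw [hd]; abel
  rw [hxd] at this
  linarith

lemma cocoercive {V : Type*} [NormedAddCommGroup V] [InnerProductSpace ℝ V]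
    (L : ℝ) (hL : 0 < L) (g : V → ℝ) (u : V → V)
    (hu : ∀ z x, g z + ⟪x - z, u z⟫_ℝ ≤ g x)
    (hS : Convex ℝ {q : V × ℝ | ∀ x, ⟪x, q.1⟫_ℝ - g x - 1/L/2 * ‖q.1‖^2 ≤ q.2}) :
    ∀ z w, g z + ⟪w - z, u z⟫_ℝ + 1/L/2 * ‖u w - u z‖^2 ≤ g w := by
  have hmem : ∀ w, (u w, ⟪w, u w⟫_ℝ - g w - 1/L/2 * ‖u w‖^2)
      ∈ {q : V × ℝ | ∀ x, ⟪x, q.1⟫_ℝ - g x - 1/L/2 * ‖q.1‖^2 ≤ q.2} := by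
    intro w x
    have h1 := hu w x
    have h2 : ⟪x - w, u w⟫_ℝ = ⟪x, u w⟫_ℝ - ⟪w, u w⟫_ℝ := inner_sub_left _ _ _
    simp only [Set.mem_setOf_eq]
    linarith
  intro z w
  set n := ‖u w - u z‖^2 with hn
  have hn0 : 0 ≤ n := by positivity
  have hstep : ∀ θ : ℝ, θ ∈ Set.Ioo (0:ℝ) 1 →
      ⟪w, u z⟫_ℝ - g w + 1/L/2 * θ * n ≤ ⟪z, u z⟫_ℝ - g z := by
    intro θ hmemθ
    obtain ⟨hθ0, hθ1⟩ := hmemθ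
    have hcomb := hS (hmem w) (hmem z) hθ0.le (by linarith : (0:ℝ) ≤ 1 - θ) (by ring)
    have happ := hcomb w
    simp only [Set.mem_setOf_eq, Prod.smul_mk, Prod.mk_add_mk, smul_eq_mul] at happ
    have E1 : ⟪w, θ • u w + (1 - θ) • u z⟫_ℝ = θ * ⟪w, u w⟫_ℝ + (1 - θ) * ⟪w, u z⟫_ℝ := by
      rw [inner_add_right, real_inner_smul_right, real_inner_smul_right]
    have E2 : ‖θ • u w + (1 - θ) • u z‖^2
        = θ^2 * ‖u w‖^2 + 2 * (θ * (1 - θ)) * ⟪u w, u z⟫_ℝ + (1 - θ)^2 * ‖u z‖^2 := by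
      rw [norm_add_sq_real, norm_smul, norm_smul, real_inner_smul_left, real_inner_smul_right,
        mul_pow, mul_pow, Real.norm_eq_abs, Real.norm_eq_abs, sq_abs, sq_abs]
      ring
    have E3 : n = ‖u w‖^2 - 2 * ⟪u w, u z⟫_ℝ + ‖u z‖^2 := norm_sub_sq_real _ _
    rw [E1, E2] at happ
    have key : (1 - θ) * ((⟪w, u z⟫_ℝ - g w + 1/L/2 * θ * n) - (⟪z, u z⟫_ℝ - g z)) ≤ 0 := by
      have hid : (1 - θ) * ((⟪w, u z⟫_ℝ - g w + 1/L/2 * θ * n) - (⟪z, u z⟫_ℝ - g z))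
          = (θ * ⟪w, u w⟫_ℝ + (1 - θ) * ⟪w, u z⟫_ℝ - g w -
              1/L/2 * (θ^2 * ‖u w‖^2 + 2 * (θ * (1 - θ)) * ⟪u w, u z⟫_ℝ + (1 - θ)^2 * ‖u z‖^2))
            - (θ * (⟪w, u w⟫_ℝ - g w - 1/L/2 * ‖u w‖^2)
              + (1 - θ) * (⟪z, u z⟫_ℝ - g z - 1/L/2 * ‖u z‖^2)) := by
        rw [E3]; ring
      linarith [happ, hid.le, hid.ge]
    nlinarith [key, sub_pos.2 hθ1]
  have hlim : Filter.Tendsto (fun θ : ℝ => ⟪w, u z⟫_ℝ - g w + 1/L/2 * θ * n)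
      (nhdsWithin (1:ℝ) (Set.Iio 1)) (nhds (⟪w, u z⟫_ℝ - g w + 1/L/2 * 1 * n)) := by
    apply Filter.Tendsto.mono_left _ nhdsWithin_le_nhds
    exact (Continuous.tendsto (by continuity) 1)
  have hfin : ⟪w, u z⟫_ℝ - g w + 1/L/2 * 1 * n ≤ ⟪z, u z⟫_ℝ - g z := by
    refine le_of_tendsto hlim ?_
    filter_upwards [Ioo_mem_nhdsLT_of_mem (Set.mem_Ioc.2 ⟨zero_lt_one, le_refl 1⟩)] with θ hθ
    exact hstep θ hθ
  have h4 : ⟪w - z, u z⟫_ℝ = ⟪w, u z⟫_ℝ - ⟪z, u z⟫_ℝ := inner_sub_left _ _ _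
  linarith

/-- A convex `g : ℝᵖ → ℝ` (full domain) is differentiable with `L`-Lipschitz gradient iff
its conjugate `g*` is `(1/L)`-strongly convex. -/
theorem lipschitz_gradient_iff_conjugate_strongly_convex (p : ℕ) (L : ℝ) (hL : 0 < L)
    (g : EuclideanSpace ℝ (Fin p) → ℝ) (hconv : ConvexOn ℝ Set.univ g) :
    (Differentiable ℝ g ∧ ∀ x y, ‖gradient g x - gradient g y‖ ≤ L * ‖x - y‖) ↔
      StrongConvexE (1 / L) (econj (fun x => ((g x : ℝ) : EReal))) := by
  set S : Set (EuclideanSpace ℝ (Fin p) × ℝ) := {q | ∀ x, ⟪x, q.1⟫_ℝ - g x - 1/L/2 * ‖q.1‖^2 ≤ q.2} with hSdef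
  have hiff : StrongConvexE (1 / L) (econj (fun x => ((g x : ℝ) : EReal))) ↔ Convex ℝ S := by
    unfold StrongConvexE ConvexFnE
    have hset : {q : EuclideanSpace ℝ (Fin p) × ℝ |
        econj (fun x => ((g x : ℝ) : EReal)) q.1 - ((1 / L / 2 * ‖q.1‖ ^ 2 : ℝ) : EReal)
          ≤ (q.2 : EReal)} = S := by
      ext q
      exact memS_iff g (1/L/2 * ‖q.1‖^2) q.2 q.1
    rw [← hset]
  rw [hiff]
  have hLne : L ≠ 0 := ne_of_gt hL
  constructor
  · -- forward: smoothness implies strong convexity of conjugate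
    rintro ⟨hdiff, hlip⟩
    have descent := descent_lemma L g hdiff hlip
    rintro ⟨y₁, r₁⟩ hq1 ⟨y₂, r₂⟩ hq2 a b ha hb hab
    have hb' : b = 1 - a := by linarith
    subst hb'
    intro x
    simp only [hSdef, Set.mem_setOf_eq, Prod.smul_mk, Prod.mk_add_mk, smul_eq_mul] at hq1 hq2 ⊢
    set e := y₁ - y₂ with he
    set x₁ := x + ((1-a)/L) • e with hx₁def
    set x₂ := x + (-(a/L)) • e with hx₂def
    have hx1 := hq1 x₁
    have hx2 := hq2 x₂
    have hd1 := descent x x₁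
    have hd2 := descent x x₂
    have E1 : ⟪x₁, y₁⟫_ℝ = ⟪x, y₁⟫_ℝ + ((1-a)/L) * (‖y₁‖^2 - ⟪y₁, y₂⟫_ℝ) := by
      rw [hx₁def, inner_add_left, real_inner_smul_left, he, inner_sub_left,
        real_inner_self_eq_norm_sq, real_inner_comm y₂ y₁]
    have E2 : ⟪x₂, y₂⟫_ℝ = ⟪x, y₂⟫_ℝ + (-(a/L)) * (⟪y₁, y₂⟫_ℝ - ‖y₂‖^2) := by
      rw [hx₂def, inner_add_left, real_inner_smul_left, he, inner_sub_left,
        real_inner_self_eq_norm_sq]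
    have hx₁sub : x₁ - x = ((1-a)/L) • e := by rw [hx₁def]; abel
    have hx₂sub : x₂ - x = (-(a/L)) • e := by rw [hx₂def]; abel
    have E3 : ⟪x₁ - x, gradient g x⟫_ℝ = ((1-a)/L) * ⟪e, gradient g x⟫_ℝ := by
      rw [hx₁sub, real_inner_smul_left]
    have E4 : ⟪x₂ - x, gradient g x⟫_ℝ = (-(a/L)) * ⟪e, gradient g x⟫_ℝ := by
      rw [hx₂sub, real_inner_smul_left]
    have E5 : ‖x₁ - x‖^2 = ((1-a)/L)^2 * ‖e‖^2 := by
      rw [hx₁sub, norm_smul, mul_pow, Real.norm_eq_abs, sq_abs]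
    have E6 : ‖x₂ - x‖^2 = (a/L)^2 * ‖e‖^2 := by
      rw [hx₂sub, norm_smul, mul_pow, Real.norm_eq_abs, abs_neg, sq_abs]
    have E7 : ⟪x, a • y₁ + (1-a) • y₂⟫_ℝ = a * ⟪x, y₁⟫_ℝ + (1-a) * ⟪x, y₂⟫_ℝ := by
      rw [inner_add_right, real_inner_smul_right, real_inner_smul_right]
    have E8 : ‖a • y₁ + (1-a) • y₂‖^2
        = a^2 * ‖y₁‖^2 + 2 * (a * (1-a)) * ⟪y₁, y₂⟫_ℝ + (1-a)^2 * ‖y₂‖^2 := by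
      rw [norm_add_sq_real, norm_smul, norm_smul, real_inner_smul_left, real_inner_smul_right,
        mul_pow, mul_pow, Real.norm_eq_abs, Real.norm_eq_abs, sq_abs, sq_abs]
      ring
    have E9 : ‖e‖^2 = ‖y₁‖^2 - 2 * ⟪y₁, y₂⟫_ℝ + ‖y₂‖^2 := by
      rw [he]; exact norm_sub_sq_real _ _
    have m1 : a * (⟪x₁, y₁⟫_ℝ - g x₁ - 1/L/2 * ‖y₁‖^2) ≤ a * r₁ :=
      mul_le_mul_of_nonneg_left hx1 ha
    have m2 : (1-a) * (⟪x₂, y₂⟫_ℝ - g x₂ - 1/L/2 * ‖y₂‖^2) ≤ (1-a) * r₂ :=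
      mul_le_mul_of_nonneg_left hx2 hb
    have m3 : a * (⟪x₁, y₁⟫_ℝ - (g x + ⟪x₁ - x, gradient g x⟫_ℝ + L/2 * ‖x₁ - x‖^2)
        - 1/L/2 * ‖y₁‖^2) ≤ a * (⟪x₁, y₁⟫_ℝ - g x₁ - 1/L/2 * ‖y₁‖^2) :=
      mul_le_mul_of_nonneg_left (by linarith) ha
    have m4 : (1-a) * (⟪x₂, y₂⟫_ℝ - (g x + ⟪x₂ - x, gradient g x⟫_ℝ + L/2 * ‖x₂ - x‖^2)
        - 1/L/2 * ‖y₂‖^2) ≤ (1-a) * (⟪x₂, y₂⟫_ℝ - g x₂ - 1/L/2 * ‖y₂‖^2) :=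
      mul_le_mul_of_nonneg_left (by linarith) hb
    have F : a * (⟪x₁, y₁⟫_ℝ - (g x + ⟪x₁ - x, gradient g x⟫_ℝ + L/2 * ‖x₁ - x‖^2)
          - 1/L/2 * ‖y₁‖^2)
        + (1-a) * (⟪x₂, y₂⟫_ℝ - (g x + ⟪x₂ - x, gradient g x⟫_ℝ + L/2 * ‖x₂ - x‖^2)
          - 1/L/2 * ‖y₂‖^2)
        = ⟪x, a • y₁ + (1-a) • y₂⟫_ℝ - g x - 1/L/2 * ‖a • y₁ + (1-a) • y₂‖^2 := by
      rw [E1, E2, E3, E4, E5, E6, E7, E8, E9]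
      field_simp
      ring
    linarith [F.le, F.ge]
  · -- reverse: strong convexity of conjugate implies smoothness
    intro hS
    choose u hu using fun z => exists_subgradient g hconv z
    have hK := cocoercive L hL g u hu hS
    have hmono : ∀ z w, 1/L * ‖u w - u z‖^2 ≤ ⟪w - z, u w - u z⟫_ℝ := by
      intro z w
      have h1 := hK z w
      have h2 := hK w z
      have e1 : ⟪z - w, u w⟫_ℝ = -⟪w - z, u w⟫_ℝ := by
        rw [← inner_neg_left, neg_sub]
      have e2 : ‖u z - u w‖ = ‖u w - u z‖ := norm_sub_rev _ _
      have e3 : ⟪w - z, u w - u z⟫_ℝ = ⟪w - z, u w⟫_ℝ - ⟪w - z, u z⟫_ℝ := inner_sub_right _ _ _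
      rw [e2] at h2
      rw [e1] at h2
      linarith
    have hlips : ∀ z w, ‖u w - u z‖ ≤ L * ‖w - z‖ := by
      intro z w
      rcases eq_or_lt_of_le (norm_nonneg (u w - u z)) with h0 | hpos
      · rw [← h0]; positivity
      · have h1 := hmono z w
        have h2 : ⟪w - z, u w - u z⟫_ℝ ≤ ‖w - z‖ * ‖u w - u z‖ := real_inner_le_norm _ _
        have h3 : 1/L * ‖u w - u z‖^2 ≤ ‖w - z‖ * ‖u w - u z‖ := le_trans h1 h2
        rw [div_mul_eq_mul_div, one_mul, div_le_iff₀ hL] at h3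
        nlinarith [h3, hpos]
    have hgrad : ∀ z, HasGradientAt g (u z) z := by
      intro z
      rw [hasGradientAt_iff_isLittleO]
      rw [Asymptotics.isLittleO_iff]
      intro c hc
      have hball : Metric.ball z (c / L) ∈ nhds z := Metric.ball_mem_nhds z (by positivity)
      filter_upwards [hball] with x hx
      have hlow : 0 ≤ g x - g z - ⟪u z, x - z⟫_ℝ := by
        have := hu z x
        rw [real_inner_comm] at this
        linarith
      have hupp : g x - g z - ⟪u z, x - z⟫_ℝ ≤ L * ‖x - z‖^2 := by
        have h1 := hu x z
        have h2 : ⟪x - z, u x - u z⟫_ℝ ≤ ‖x - z‖ * ‖u x - u z‖ := real_inner_le_norm _ _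
        have h3 := hlips z x
        have e1 : ⟪z - x, u x⟫_ℝ = -⟪x - z, u x⟫_ℝ := by rw [← inner_neg_left, neg_sub]
        have e2 : ⟪x - z, u x - u z⟫_ℝ = ⟪x - z, u x⟫_ℝ - ⟪x - z, u z⟫_ℝ := inner_sub_right _ _ _
        have e3 : ⟪u z, x - z⟫_ℝ = ⟪x - z, u z⟫_ℝ := real_inner_comm _ _
        nlinarith [norm_nonneg (x - z), norm_nonneg (u x - u z)]
      have hxz : ‖x - z‖ ≤ c / L := by
        rw [Metric.mem_ball, dist_eq_norm] at hx
        linarith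
      rw [Real.norm_eq_abs, abs_of_nonneg hlow]
      have h4 := mul_le_mul_of_nonneg_left hxz (mul_nonneg hL.le (norm_nonneg (x - z)))
      have h5 : L * ‖x - z‖ * (c / L) = c * ‖x - z‖ := by field_simp
      have h6 : L * ‖x - z‖^2 = L * ‖x - z‖ * ‖x - z‖ := by ring
      linarith
    refine ⟨fun z => (hgrad z).differentiableAt, fun x y => ?_⟩
    rw [(hgrad x).gradient, (hgrad y).gradient]
    exact hlips y x
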